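/- arXiv:1707.08292 — 2 statements merged into one kernel-verified Lean document; each statement's English description precedes it below -/
import Mathlib

section
/- Let A be a finitary hereditary abelian category over a finite field. For objects M, B, A, N of A and a fixed integer n, |{g ∈ Hom_A(B,A) : Ker g ≅ M, Coker g ≅ N}| = |V(M,B,A,N)| / (a_M · a_N), where V(M,B,A,N) is the set of exact sequences 0 → M → B → A → N → 0 and a_X = |Aut(X)|. -/
open CategoryTheory CategoryTheory.Limits ZeroObject

universe w w' v u

variable {A : Type u} [Category.{v} A] [Abelian A]

/-- The acyclic complex `K_{X,m}`: `X` in degrees `m-1` and `m`, identity differential. -/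
noncomputable def Kc (X : A) (m : ℤ) : CochainComplex A ℤ where
  X i := if i = m - 1 ∨ i = m then X else 0
  d i j := if h : i = m - 1 ∧ j = m then
      eqToHom (by rw [if_pos (Or.inl h.1), if_pos (Or.inr h.2)]) else 0
  shape i j hij := by
    try dsimp only
    rw [dif_neg]
    rintro ⟨rfl, rfl⟩
    exact hij (by simp [ComplexShape.up_Rel])
  d_comp_d' i j k _ _ := by
    try dsimp only
    by_cases h1 : i = m - 1 ∧ j = m
    · obtain ⟨hi, hj⟩ := h1
      rw [dif_pos ⟨hi, hj⟩, dif_neg (fun h2 => by obtain ⟨h2a, h2b⟩ := h2; omega)]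
      exact comp_zero
    · rw [dif_neg h1, zero_comp]

/-- The stalk complex `U_{X,n}` with `X` concentrated in degree `n`. -/
noncomputable def Uc (X : A) (n : ℤ) : CochainComplex A ℤ :=
  (HomologicalComplex.single A (ComplexShape.up ℤ) n).obj X

/-- A complex is bounded. -/
def Bdd (M : CochainComplex A ℤ) : Prop :=
  ∃ a b : ℤ, ∀ i : ℤ, i < a ∨ b < i → IsZero (M.X i)

/-- A complex is acyclic if it is exact everywhere. -/
def Acyc (K : CochainComplex A ℤ) : Prop := ∀ i : ℤ, K.ExactAt i

section Counting

variable (C : Type w) [Category.{w'} C] [Abelian C]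

variable {C} in
/-- An extension of `L` by `M`: a short exact sequence `0 → M → E → L → 0`. -/
structure Extn (M L : C) where
  E : C
  ι : M ⟶ E
  π : E ⟶ L
  w : ι ≫ π = 0
  shortExact : (ShortComplex.mk ι π w).ShortExact

variable {C} in
/-- Equivalence of extensions (isomorphism of the middle terms compatible with the maps). -/
def ExtnEquiv {M L : C} (e e' : Extn M L) : Prop :=
  ∃ φ : e.E ≅ e'.E, e.ι ≫ φ.hom = e'.ι ∧ φ.hom ≫ e'.π = e.π

variable {C} in
/-- `|Ext¹(L, M)|`: the number of equivalence classes of extensions of `L` by `M`. -/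
noncomputable def ext1Card (L M : C) : ℕ :=
  Nat.card (Quot (ExtnEquiv (M := M) (L := L)))

variable {C} in
/-- `|Ext¹(L, M)_X|`: the number of equivalence classes of extensions of `L` by `M`
whose middle term is isomorphic to `X`. -/
noncomputable def extCardWith (L M X : C) : ℕ :=
  Nat.card (Quot (fun e e' : {e : Extn M L // Nonempty (e.E ≅ X)} => ExtnEquiv e.1 e'.1))

variable {C} in
/-- `|Hom(X, Y)|`. -/
noncomputable def homCard (X Y : C) : ℕ := Nat.card (X ⟶ Y)

variable {C} in
/-- `a_X = |Aut X|`. -/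
noncomputable def autCard (X : C) : ℕ := Nat.card (Aut X)

/-- The set of isomorphism classes of objects of `C`. -/
abbrev IsoCls : Type _ := Quotient (CategoryTheory.isIsomorphicSetoid C)

variable {C} in
/-- The Hall number `g^X_{AB}`: the number of subobjects of `X` isomorphic to `B`
with quotient isomorphic to `A`. -/
noncomputable def hallNum (X A B : C) : ℕ :=
  Nat.card {S : Subobject X // Nonempty ((S : C) ≅ B) ∧ Nonempty (cokernel S.arrow ≅ A)}

variable {C} in
/-- `V(M, B, A, N)`: the set of exact sequences `0 → M → B → A → N → 0`. -/
def Vset (M B A N : C) : Type _ :=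
  {t : (M ⟶ B) × (B ⟶ A) × (A ⟶ N) //
    Mono t.1 ∧ Epi t.2.2 ∧
    ∃ w1 : t.1 ≫ t.2.1 = 0, (ShortComplex.mk t.1 t.2.1 w1).Exact ∧
    ∃ w2 : t.2.1 ≫ t.2.2 = 0, (ShortComplex.mk t.2.1 t.2.2 w2).Exact}

variable {C} in
/-- `γ^{MN}_{AB} = |V(M,B,A,N)| / (a_A a_B)`. -/
noncomputable def gammaC (X Y M N : C) : ℚ :=
  (Nat.card (Vset M Y X N) : ℚ) / ((autCard X : ℚ) * (autCard Y : ℚ))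

end Counting

section Aux

variable {A : Type u} [Category.{v} A] [Abelian A]

instance isoFinite [∀ X Y : A, Finite (X ⟶ Y)] (X Y : A) : Finite (X ≅ Y) :=
  Finite.of_injective (fun i => i.hom) (fun _ _ h => Iso.ext h)

instance autFinite [∀ X Y : A, Finite (X ⟶ Y)] (X : A) : Finite (Aut X) :=
  inferInstanceAs (Finite (X ≅ X))

/-- Transporting isomorphisms along a fixed isomorphism, left version. -/
def isoEquivAutLeft {X Y : A} (i : X ≅ Y) : (X ≅ Y) ≃ Aut X where
  toFun j := j ≪≫ i.symm
  invFun a := (a : X ≅ X) ≪≫ i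
  left_inv j := by ext; simp
  right_inv a := by ext; show (a.hom ≫ i.hom) ≫ i.inv = a.hom; simp

/-- Transporting isomorphisms along a fixed isomorphism, right version. -/
def isoEquivAutRight {X Y : A} (i : X ≅ Y) : (X ≅ Y) ≃ Aut Y where
  toFun j := i.symm ≪≫ j
  invFun a := i ≪≫ (a : Y ≅ Y)
  left_inv j := by ext; simp
  right_inv a := by ext; show i.inv ≫ (i.hom ≫ a.hom) = a.hom; simp

/-- The canonical iso `M ≅ kernel g` from an exact sequence. -/
noncomputable def kerIso {M Y X : A} {f : M ⟶ Y} {g : Y ⟶ X} (w : f ≫ g = 0)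
    (hex : (ShortComplex.mk f g w).Exact) (hm : Mono f) : M ≅ kernel g :=
  letI := hm
  IsLimit.conePointUniqueUpToIso hex.fIsKernel (limit.isLimit _)

lemma kerIso_hom {M Y X : A} {f : M ⟶ Y} {g : Y ⟶ X} (w : f ≫ g = 0)
    (hex : (ShortComplex.mk f g w).Exact) (hm : Mono f) :
    (kerIso w hex hm).hom ≫ kernel.ι g = f := by
  letI := hm
  exact IsLimit.conePointUniqueUpToIso_hom_comp _ _ WalkingParallelPair.zero

/-- The canonical iso `cokernel g ≅ N` from an exact sequence. -/
noncomputable def cokerIso {Y X N : A} {g : Y ⟶ X} {h : X ⟶ N} (w : g ≫ h = 0)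
    (hex : (ShortComplex.mk g h w).Exact) (he : Epi h) : cokernel g ≅ N :=
  letI := he
  IsColimit.coconePointUniqueUpToIso (colimit.isColimit _) hex.gIsCokernel

lemma cokerIso_hom {Y X N : A} {g : Y ⟶ X} {h : X ⟶ N} (w : g ≫ h = 0)
    (hex : (ShortComplex.mk g h w).Exact) (he : Epi h) :
    cokernel.π g ≫ (cokerIso w hex he).hom = h := by
  letI := he
  exact IsColimit.comp_coconePointUniqueUpToIso_hom _ _ WalkingParallelPair.one

/-- The backward map for the main bijection. -/
noncomputable def toVset (M X Y N : A)
    (x : Σ g : {g : Y ⟶ X // Nonempty (kernel g ≅ M) ∧ Nonempty (cokernel g ≅ N)},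
      (M ≅ kernel g.1) × (cokernel g.1 ≅ N)) : Vset M Y X N :=
  ⟨(x.2.1.hom ≫ kernel.ι x.1.1, x.1.1, cokernel.π x.1.1 ≫ x.2.2.hom),
    mono_comp _ _, epi_comp _ _, by simp,
    ShortComplex.exact_of_f_is_kernel _
      (IsLimit.ofIsoLimit (kernelIsKernel _) (Fork.ext x.2.1.symm (by simp))),
    by simp,
    ShortComplex.exact_of_g_is_cokernel _
      (IsColimit.ofIsoColimit (cokernelIsCokernel _) (Cofork.ext x.2.2 (by simp)))⟩

theorem toVset_bijective (M X Y N : A) : Function.Bijective (toVset M X Y N) := by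
  constructor
  · rintro ⟨⟨g, hg⟩, e, q⟩ ⟨⟨g', hg'⟩, e', q'⟩ h
    have h1 : ((e.hom ≫ kernel.ι g, g, cokernel.π g ≫ q.hom) :
        (M ⟶ Y) × (Y ⟶ X) × (X ⟶ N))
        = (e'.hom ≫ kernel.ι g', g', cokernel.π g' ≫ q'.hom) :=
      congrArg Subtype.val h
    obtain ⟨hf, hgg, hh⟩ : _ ∧ g = g' ∧ _ := by
      simpa [Prod.ext_iff] using h1
    subst hgg
    have he : e = e' := Iso.ext ((cancel_mono (kernel.ι g)).1 hf)
    have hq : q = q' := Iso.ext ((cancel_epi (cokernel.π g)).1 hh)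
    subst he; subst hq
    rfl
  · rintro ⟨⟨f, g, h⟩, hm, he, w1, ex1, w2, ex2⟩
    refine ⟨⟨⟨g, ⟨(kerIso w1 ex1 hm).symm⟩, ⟨cokerIso w2 ex2 he⟩⟩,
      (kerIso w1 ex1 hm, cokerIso w2 ex2 he)⟩, ?_⟩
    apply Subtype.ext
    dsimp [toVset]
    rw [kerIso_hom, cokerIso_hom]

end Aux

theorem stmt13 (k : Type) [Field k] [Finite k] [CategoryTheory.Linear k A]
    [∀ X Y : A, Finite (X ⟶ Y)]
    (hfinext : ∀ X Y : A, Finite (Quot (ExtnEquiv (M := Y) (L := X))))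
    [HasExt.{w} A]
    (hered : ∀ (X Y : A) (n : ℕ), 2 ≤ n → Subsingleton (Abelian.Ext X Y n))
    (M X Y N : A) (n : ℤ) :
    (Nat.card {g : Y ⟶ X // Nonempty (kernel g ≅ M) ∧ Nonempty (cokernel g ≅ N)} : ℚ) =
      (Nat.card (Vset M Y X N) : ℚ) / ((autCard M : ℚ) * (autCard N : ℚ)) := by
  
  classical
  set G := {g : Y ⟶ X // Nonempty (kernel g ≅ M) ∧ Nonempty (cokernel g ≅ N)} with hG
  have hVcard : Nat.card (Vset M Y X N) =
      Nat.card (Σ g : G, (M ≅ kernel g.1) × (cokernel g.1 ≅ N)) :=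
    (Nat.card_eq_of_bijective _ (toVset_bijective M X Y N)).symm
  have hSig : Nat.card (Σ g : G, (M ≅ kernel g.1) × (cokernel g.1 ≅ N)) =
      Nat.card G * (Nat.card (Aut M) * Nat.card (Aut N)) := by
    have eqv : (Σ g : G, (M ≅ kernel g.1) × (cokernel g.1 ≅ N)) ≃ G × (Aut M × Aut N) :=
      (Equiv.sigmaCongrRight (fun g => Equiv.prodCongr
        (isoEquivAutLeft (Classical.choice g.2.1).symm)
        (isoEquivAutRight (Classical.choice g.2.2)))).trans (Equiv.sigmaEquivProd _ _)
    rw [Nat.card_congr eqv, Nat.card_prod, Nat.card_prod]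
  have hM : (0 : ℚ) < (autCard M : ℚ) := by
    have : 0 < Nat.card (Aut M) := Nat.card_pos (α := Aut M)
    exact_mod_cast this
  have hN : (0 : ℚ) < (autCard N : ℚ) := by
    have : 0 < Nat.card (Aut N) := Nat.card_pos (α := Aut N)
    exact_mod_cast this
  rw [eq_div_iff (by positivity)]
  rw [hVcard, hSig]
  unfold autCard
  push_cast
  ring
end

section
/- Let A be a finitary hereditary abelian category over a finite field. In the quotient (H(C^b(A))/I) of the Ringel-Hall algebra of bounded complexes, for any bounded acyclic complex K and any bounded complex M: [M] ⋄ [K] = ⟨[M],[K]⟩^{-1} [M ⊕ K]. In particular, for acyclic K₁, K₂: [K₁] ⋄ [K₂] = ⟨[K₁],[K₂]⟩^{-1} [K₁ ⊕ K₂]. -/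
open CategoryTheory CategoryTheory.Limits ZeroObject

universe w w' v u

variable {A : Type u} [Category.{v} A] [Abelian A]

section AuxLemmas

variable {C : Type w} [Category.{w'} C] [Abelian C]

lemma extnEquiv_equivalence (L M : C) : Equivalence (ExtnEquiv (M := M) (L := L)) := by
  constructor
  · intro e; exact ⟨Iso.refl _, by simp, by simp⟩
  · rintro e e' ⟨φ, h1, h2⟩
    refine ⟨φ.symm, ?_, ?_⟩
    · rw [← h1]; simp
    · rw [← h2]; simp
  · rintro e e' e'' ⟨φ, h1, h2⟩ ⟨φ', h1', h2'⟩
    refine ⟨φ ≪≫ φ', ?_, ?_⟩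
    · rw [Iso.trans_hom, ← h1', ← h1, Category.assoc]
    · rw [Iso.trans_hom, Category.assoc, h2', h2]

lemma shortExact_isZero_X₂ {S : ShortComplex C} (h : S.ShortExact)
    (h1 : IsZero S.X₁) (h3 : IsZero S.X₃) : IsZero S.X₂ :=
  h.exact.isZero_X₂ (h1.eq_of_src _ _) (h3.eq_of_tgt _ _)

/-- Class map to isomorphism classes. -/
noncomputable def gdeg {L M : C} : Quot (ExtnEquiv (M := M) (L := L)) → IsoCls C :=
  Quot.lift (fun e => Quotient.mk (isIsomorphicSetoid C) e.E)
    (fun _ _ h => Quotient.sound ⟨h.choose⟩)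

noncomputable def isoOut (X : C) : X ≅ (Quotient.mk (isIsomorphicSetoid C) X).out :=
  (Classical.choice (Quotient.mk_out (s := isIsomorphicSetoid C) X)).symm

/-- Representative object of the middle-term class. -/
noncomputable def Rrep {L M : C} (q : Quot (ExtnEquiv (M := M) (L := L))) : C :=
  (gdeg q).out

noncomputable def isoRrep {L M : C} (e : Extn M L) :
    e.E ≅ Rrep (Quot.mk (ExtnEquiv (M := M) (L := L)) e) :=
  isoOut e.E

end AuxLemmas


section AuxDeg

lemma degSE {S : ShortComplex (CochainComplex A ℤ)} (h : S.ShortExact) (i : ℤ) :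
    (S.map (HomologicalComplex.eval A (ComplexShape.up ℤ) i)).ShortExact :=
  h.map_of_exact _

/-- The degreewise extension in `A` induced by an extension of complexes. -/
noncomputable def degExtn {M K : CochainComplex A ℤ} (e : Extn K M) (i : ℤ) :
    Extn (K.X i) (M.X i) where
  E := e.E.X i
  ι := e.ι.f i
  π := e.π.f i
  w := by rw [← HomologicalComplex.comp_f, e.w]; rfl
  shortExact := degSE (S := ShortComplex.mk e.ι e.π e.w) e.shortExact i

lemma isZero_extn_X {M K : CochainComplex A ℤ} (e : Extn K M) (i : ℤ)
    (h1 : IsZero (K.X i)) (h3 : IsZero (M.X i)) : IsZero (e.E.X i) :=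
  shortExact_isZero_X₂ (degExtn e i).shortExact h1 h3

lemma bdd_extn {M K : CochainComplex A ℤ} (e : Extn K M) (hM : Bdd M) (hK : Bdd K) :
    Bdd e.E := by
  obtain ⟨a₁, b₁, h₁⟩ := hM
  obtain ⟨a₂, b₂, h₂⟩ := hK
  exact ⟨min a₁ a₂, max b₁ b₂, fun i hi =>
    isZero_extn_X e i (h₂ i (by omega)) (h₁ i (by omega))⟩

end AuxDeg


section AuxFinite

variable [∀ X Y : A, Finite (X ⟶ Y)]

lemma finite_extnQuot
    (hfinext : ∀ X Y : A, Finite (Quot (ExtnEquiv (M := Y) (L := X))))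
    (M K : CochainComplex A ℤ) (hM : Bdd M) (hK : Bdd K) :
    Finite (Quot (ExtnEquiv (M := K) (L := M))) := by
  classical
  obtain ⟨a₁, b₁, h₁⟩ := hM
  obtain ⟨a₂, b₂, h₂⟩ := hK
  set a := min a₁ a₂ with ha
  set b := max b₁ b₂ with hb
  have hMz : ∀ i : ℤ, i < a ∨ b < i → IsZero (M.X i) := fun i hi => h₁ i (by omega)
  have hKz : ∀ i : ℤ, i < a ∨ b < i → IsZero (K.X i) := fun i hi => h₂ i (by omega)
  have hEz : ∀ (e : Extn K M) (i : ℤ), i < a ∨ b < i → IsZero (e.E.X i) :=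
    fun e i hi => isZero_extn_X e i (hKz i hi) (hMz i hi)
  set T := Quot (ExtnEquiv (M := K) (L := M)) with hT
  set W := Finset.Icc a b with hW
  have hout : ∀ i : ℤ, i ∉ W → i < a ∨ b < i := by
    intro i h
    rw [hW, Finset.mem_Icc] at h
    omega
  haveI : ∀ i : ℤ, Finite (Quot (ExtnEquiv (M := K.X i) (L := M.X i))) :=
    fun i => hfinext _ _
  let cl : Extn K M → ∀ i : ℤ, Quot (ExtnEquiv (M := K.X i) (L := M.X i)) :=
    fun e i => Quot.mk _ (degExtn e i)
  let rep : T → Extn K M := fun t => (Quot.exists_rep t).choose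
  have hrep : ∀ t, Quot.mk _ (rep t) = t := fun t => (Quot.exists_rep t).choose_spec
  let QV := (i : W) → Quot (ExtnEquiv (M := K.X (i : ℤ)) (L := M.X (i : ℤ)))
  let SV : QV → Set T := fun V => {t | ∀ i : W, cl (rep t) (i : ℤ) = V i}
  have hcover : (Set.univ : Set T) ⊆ ⋃ V : QV, SV V := fun t _ =>
    Set.mem_iUnion.mpr ⟨fun i => cl (rep t) (i : ℤ), fun i => rfl⟩
  have hfinSV : ∀ V : QV, (SV V).Finite := by
    intro V
    -- the isomorphism with the fixed representatives
    let Ψ : ∀ (t : T), t ∈ SV V → ∀ i : W, (rep t).E.X (i : ℤ) ≅ Rrep (V i) :=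
      fun t ht i => isoRrep (degExtn (rep t) (i : ℤ)) ≪≫ eqToIso (congrArg Rrep (ht i))
    let HD := ((i : W) → (K.X (i : ℤ) ⟶ Rrep (V i))) × ((i : W) → (Rrep (V i) ⟶ M.X (i : ℤ)))
        × ((i : W) → (j : W) → (Rrep (V i) ⟶ Rrep (V j)))
    let F : SV V → HD := fun p =>
      ⟨fun i => (rep p.1).ι.f (i : ℤ) ≫ (Ψ p.1 p.2 i).hom,
       fun i => (Ψ p.1 p.2 i).inv ≫ (rep p.1).π.f (i : ℤ),
       fun i j => (Ψ p.1 p.2 i).inv ≫ (rep p.1).E.d (i : ℤ) (j : ℤ) ≫ (Ψ p.1 p.2 j).hom⟩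
    have hinj : Function.Injective F := by
      rintro ⟨t, ht⟩ ⟨t', ht'⟩ hF
      rw [Prod.ext_iff] at hF
      obtain ⟨hF1, hF'⟩ := hF
      rw [Prod.ext_iff] at hF'
      obtain ⟨hF2, hF3⟩ := hF'
      simp only [F] at hF1 hF2 hF3
      set e := rep t with he
      set e' := rep t' with he'
      let φ : ∀ i : ℤ, e.E.X i ≅ e'.E.X i := fun i =>
        if h : i ∈ W then Ψ t ht ⟨i, h⟩ ≪≫ (Ψ t' ht' ⟨i, h⟩).symm
        else (hEz e i (hout i h)).iso (hEz e' i (hout i h))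
      have hcomm : ∀ i j, (ComplexShape.up ℤ).Rel i j →
          (φ i).hom ≫ e'.E.d i j = e.E.d i j ≫ (φ j).hom := by
        intro i j _
        by_cases hj : j ∈ W
        · by_cases hi : i ∈ W
          · have h3 := congrFun (congrFun hF3 ⟨i, hi⟩) ⟨j, hj⟩
            simp only [φ, dif_pos hi, dif_pos hj, Iso.trans_hom, Iso.symm_hom]
            have : e'.E.d i j = (Ψ t' ht' ⟨i, hi⟩).hom ≫
                ((Ψ t ht ⟨i, hi⟩).inv ≫ e.E.d i j ≫ (Ψ t ht ⟨j, hj⟩).hom) ≫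
                (Ψ t' ht' ⟨j, hj⟩).inv := by
              rw [h3]; simp; rfl
            rw [this]
            simp
          · exact (hEz e i (hout i hi)).eq_of_src _ _
        · exact (hEz e' j (hout j hj)).eq_of_tgt _ _
      let Φ : e.E ≅ e'.E := HomologicalComplex.Hom.isoOfComponents φ hcomm
      have hι : e.ι ≫ Φ.hom = e'.ι := by
        apply HomologicalComplex.hom_ext
        intro i
        rw [HomologicalComplex.comp_f]
        show e.ι.f i ≫ (φ i).hom = e'.ι.f i
        by_cases hi : i ∈ W
        · have h1 := congrFun hF1 ⟨i, hi⟩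
          simp only [φ, dif_pos hi, Iso.trans_hom, Iso.symm_hom]
          rw [← Category.assoc, h1, Category.assoc]
          simp
          rfl
        · exact (hKz i (hout i hi)).eq_of_src _ _
      have hπ : Φ.hom ≫ e'.π = e.π := by
        apply HomologicalComplex.hom_ext
        intro i
        rw [HomologicalComplex.comp_f]
        show (φ i).hom ≫ e'.π.f i = e.π.f i
        by_cases hi : i ∈ W
        · have h2 := congrFun hF2 ⟨i, hi⟩
          simp only [φ, dif_pos hi, Iso.trans_hom, Iso.symm_hom]
          rw [Category.assoc, ← h2]
          simp
          rfl
        · exact (hEz e i (hout i hi)).eq_of_src _ _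
      have : ExtnEquiv e e' := ⟨Φ, hι, hπ⟩
      have ht_eq : t = t' := by
        rw [← hrep t, ← hrep t']
        exact Quot.sound this
      exact Subtype.ext ht_eq
    haveI : Finite (SV V) := Finite.of_injective F hinj
    exact Set.toFinite _
  have : (Set.univ : Set T).Finite :=
    Set.Finite.subset (Set.finite_iUnion hfinSV) hcover
  exact Set.finite_univ_iff.mp this

end AuxFinite


variable (A) in
/-- The data of a `ℚ`-algebra together with a class map from bounded complexes
satisfying the defining relations of the quotient `H(C^b(A))/I` of the Ringel–Hall
algebra of bounded complexes: the Hall multiplication rule and the relations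
`[L] = [K ⊕ M]` for short exact sequences `K ↪ L ↠ M` with `K` acyclic.  Since the
quotient is the universal such datum, an identity holds in `H(C^b(A))/I` if and only
if it holds in every such datum. -/
structure HallQuotData where
  R : Type*
  [ringR : Ring R]
  [algR : Algebra ℚ R]
  cls : CochainComplex A ℤ → R
  cls_iso : ∀ {L M : CochainComplex A ℤ}, (L ≅ M) → cls L = cls M
  hall_mul : ∀ L M : CochainComplex A ℤ, Bdd L → Bdd M →
    cls L * cls M =
      ∑ᶠ x : IsoCls (CochainComplex A ℤ),
        ((extCardWith L M x.out : ℚ) / (homCard L M : ℚ)) • cls x.out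
  ideal_rel : ∀ S : ShortComplex (CochainComplex A ℤ), S.ShortExact →
    Bdd S.X₁ → Bdd S.X₂ → Bdd S.X₃ → Acyc S.X₁ → cls S.X₂ = cls (S.X₁ ⊞ S.X₃)

attribute [instance] HallQuotData.ringR HallQuotData.algR

section AuxCount

lemma finsum_card_fiber {α : Type*} {β : Type*} [Finite α] (f : α → β) :
    ∑ᶠ b : β, (Nat.card {a : α // f a = b} : ℚ) = (Nat.card α : ℚ) := by
  classical
  cases nonempty_fintype α
  have hrange : (Set.range f).Finite := Set.finite_range f
  have hsupp : (Function.support fun b => (Nat.card {a : α // f a = b} : ℚ)) ⊆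
      hrange.toFinset := by
    intro b hb
    simp only [Function.mem_support] at hb
    rw [Finset.mem_coe, Set.Finite.mem_toFinset]
    by_contra hmem
    apply hb
    have : IsEmpty {a : α // f a = b} := ⟨fun ⟨a, ha⟩ => hmem ⟨a, ha⟩⟩
    simp [Nat.card_of_isEmpty]
  rw [finsum_eq_finset_sum_of_support_subset _ hsupp]
  have : ∀ b : β, (Nat.card {a : α // f a = b} : ℚ) =
      ((Finset.univ.filter fun a : α => f a = b).card : ℚ) := by
    intro b
    rw [Nat.card_eq_fintype_card, Fintype.card_subtype]
  simp_rw [this]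
  rw [← Nat.cast_sum]
  have hcard : (Finset.univ : Finset α).card =
      ∑ b ∈ hrange.toFinset, (Finset.univ.filter fun a => f a = b).card :=
    Finset.card_eq_sum_card_fiberwise
      (fun a _ => by rw [Finset.mem_coe, Set.Finite.mem_toFinset]; exact Set.mem_range_self a)
  rw [← hcard, Finset.card_univ, Nat.card_eq_fintype_card]

lemma extCardWith_eq_card_fiber {C : Type w} [Category.{w'} C] [Abelian C] (L M : C)
    (x : IsoCls C) :
    extCardWith L M x.out =
      Nat.card {t : Quot (ExtnEquiv (M := M) (L := L)) // gdeg t = x} := by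
  apply Nat.card_congr
  refine Equiv.ofBijective
    (Quot.lift (fun se => (⟨Quot.mk _ se.1,
      (Quotient.sound se.2).trans (Quotient.out_eq x)⟩ :
        {t : Quot (ExtnEquiv (M := M) (L := L)) // gdeg t = x}))
      (fun se se' h => Subtype.ext (Quot.sound h))) ⟨?_, ?_⟩
  · intro q q'
    induction q using Quot.ind with | _ se =>
    induction q' using Quot.ind with | _ se' =>
    intro h
    have h' : Quot.mk _ se.1 = Quot.mk _ se'.1 := congrArg Subtype.val h
    have := (extnEquiv_equivalence L M).eqvGen_iff.mp (Quot.eq.mp h')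
    exact Quot.sound this
  · rintro ⟨t, ht⟩
    obtain ⟨e, rfl⟩ := Quot.exists_rep t
    have hiso : Nonempty (e.E ≅ x.out) := by
      apply Quotient.exact (s := isIsomorphicSetoid C)
      rw [← Quotient.out_eq x] at ht
      exact ht
    exact ⟨Quot.mk _ ⟨e, hiso⟩, Subtype.ext rfl⟩

end AuxCount

section AuxMain

variable [∀ X Y : A, Finite (X ⟶ Y)]

lemma main_identity
    (hfinext : ∀ X Y : A, Finite (Quot (ExtnEquiv (M := Y) (L := X))))
    (H : HallQuotData A) (M K : CochainComplex A ℤ)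
    (hM : Bdd M) (hK : Bdd K) (hKac : Acyc K) :
    H.cls M * H.cls K =
      ((homCard M K : ℚ) / (ext1Card M K : ℚ))⁻¹ • H.cls (M ⊞ K) := by
  rw [H.hall_mul M K hM hK]
  have key : ∀ x : IsoCls (CochainComplex A ℤ),
      ((extCardWith M K x.out : ℚ) / (homCard M K : ℚ)) • H.cls x.out =
        (extCardWith M K x.out : ℚ) • ((homCard M K : ℚ)⁻¹ • H.cls (M ⊞ K)) := by
    intro x
    by_cases hx : extCardWith M K x.out = 0
    · simp [hx]
    · have hnon : Nonempty {e : Extn K M // Nonempty (e.E ≅ x.out)} := by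
        obtain ⟨⟨q⟩, -⟩ := Nat.card_ne_zero.mp hx
        exact ⟨(Quot.exists_rep q).choose⟩
      obtain ⟨⟨e, ⟨iso⟩⟩⟩ := hnon
      have hb : Bdd e.E := bdd_extn e hM hK
      have h1 : H.cls x.out = H.cls (M ⊞ K) :=
        (H.cls_iso iso.symm).trans
          ((H.ideal_rel (ShortComplex.mk e.ι e.π e.w) e.shortExact hK hb hM hKac).trans
            (H.cls_iso (biprod.braiding K M)))
      rw [h1, div_eq_mul_inv, mul_smul]
  rw [finsum_congr key, ← finsum_smul]
  have hsum : (∑ᶠ x : IsoCls (CochainComplex A ℤ), (extCardWith M K x.out : ℚ)) =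
      (ext1Card M K : ℚ) := by
    haveI : Finite (Quot (ExtnEquiv (M := K) (L := M))) :=
      finite_extnQuot hfinext M K hM hK
    calc (∑ᶠ x : IsoCls (CochainComplex A ℤ), (extCardWith M K x.out : ℚ))
        = ∑ᶠ x : IsoCls (CochainComplex A ℤ),
            (Nat.card {t : Quot (ExtnEquiv (M := K) (L := M)) // gdeg t = x} : ℚ) :=
          finsum_congr fun x => by rw [extCardWith_eq_card_fiber]
      _ = (Nat.card (Quot (ExtnEquiv (M := K) (L := M))) : ℚ) := finsum_card_fiber gdeg
      _ = (ext1Card M K : ℚ) := rfl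
  rw [hsum, smul_smul, inv_div, div_eq_mul_inv]

end AuxMain


theorem stmt17 (k : Type) [Field k] [Finite k] [CategoryTheory.Linear k A]
    [∀ X Y : A, Finite (X ⟶ Y)]
    (hfinext : ∀ X Y : A, Finite (Quot (ExtnEquiv (M := Y) (L := X))))
    [HasExt.{w} A]
    (hered : ∀ (X Y : A) (n : ℕ), 2 ≤ n → Subsingleton (Abelian.Ext X Y n))
    (H : HallQuotData A) :
    (∀ M K : CochainComplex A ℤ, Bdd M → Bdd K → Acyc K →
      H.cls M * H.cls K =
        ((homCard M K : ℚ) / (ext1Card M K : ℚ))⁻¹ • H.cls (M ⊞ K)) ∧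
    (∀ K₁ K₂ : CochainComplex A ℤ, Bdd K₁ → Bdd K₂ → Acyc K₁ → Acyc K₂ →
      H.cls K₁ * H.cls K₂ =
        ((homCard K₁ K₂ : ℚ) / (ext1Card K₁ K₂ : ℚ))⁻¹ • H.cls (K₁ ⊞ K₂)) := by
  constructor
  · intro M K hM hK hKac
    exact main_identity hfinext H M K hM hK hKac
  · intro K₁ K₂ h₁ h₂ hac₁ hac₂
    exact main_identity hfinext H K₁ K₂ h₁ h₂ hac₂
end
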